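/- Fix a probability distribution μ on K, functions V, Q : K → ℝ, constants a, b ∈ ℝ, and t ≥ 0. Let μ_s(x) := ∑_z μ(z)(e^{sL})_{z,x} and define the two-time correlation C(s,u) := ∑_x μ_s(x) V(x) (e^{(u−s)L} Q)(x). Then for every 0 ≤ s ≤ t: the function s' ↦ C(s',t) is differentiable at s with some derivative D_s, the function u ↦ C(s,u) is differentiable at t with some derivative D_t, and ∑_x μ_s(x) (L′ (e^{(t−s)L} Q))(x) = b·D_s − a·D_t + b [ ∑_x μ_s(x) V(x) (e^{(t−s)L} (L Q))(x) − ∑_x μ_s(x) (L V)(x) (e^{(t−s)L} Q)(x) ]. (This is the response formula of Proposition 1: the response function R(t,s) equals ∑_x μ_s(x)(L′(e^{(t−s)L}Q))(x).) -/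

import Mathlib

set_option linter.unusedSectionVars false

/-- The generator matrix of the Markov jump process with rates `W`:
entry `W x y` at `(x, y)` for `x ≠ y` and `-∑_{y ≠ x} W x y` on the diagonal. -/
noncomputable def genMatrix {K : Type*} [Fintype K] [DecidableEq K] (W : K → K → ℝ) :
    Matrix K K ℝ :=
  Matrix.of fun x y =>
    if x = y then -∑ z ∈ Finset.univ.filter (fun z => z ≠ x), W x z else W x y

/-- The semigroup `e^{tL}` (matrix exponential of `t • L`). -/
noncomputable def expL {K : Type*} [Fintype K] [DecidableEq K] (W : K → K → ℝ) (t : ℝ) :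
    Matrix K K ℝ :=
  NormedSpace.exp (t • genMatrix W)

/-- Action of `e^{tL}` on observables: `(e^{tL} f)(x) = ∑ y, (e^{tL})_{x,y} f y`. -/
noncomputable def actE {K : Type*} [Fintype K] [DecidableEq K] (W : K → K → ℝ) (t : ℝ)
    (f : K → ℝ) : K → ℝ :=
  fun x => ∑ y, expL W t x y * f y

/-- Action of `e^{tL}` on distributions: `(μ e^{tL})(x) = ∑ z, μ z (e^{tL})_{z,x}`. -/
noncomputable def muE {K : Type*} [Fintype K] [DecidableEq K] (W : K → K → ℝ) (μ : K → ℝ)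
    (t : ℝ) : K → ℝ :=
  fun x => ∑ z, μ z * expL W t z x

/-- The backward generator acting on observables. -/
noncomputable def genL {K : Type*} [Fintype K] (W : K → K → ℝ) (f : K → ℝ) : K → ℝ :=
  fun x => ∑ y, W x y * (f y - f x)

/-- The linearized perturbation operator
`(L' f)(x) = ∑ y, W x y * (b V y - a V x) * (f y - f x)`. -/
noncomputable def genL' {K : Type*} [Fintype K] (W : K → K → ℝ) (V : K → ℝ) (a b : ℝ)
    (f : K → ℝ) : K → ℝ :=
  fun x => ∑ y, W x y * (b * V y - a * V x) * (f y - f x)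

/-- The perturbed rates `W_h x y = W x y * exp (h (b V y - a V x))`. -/
noncomputable def pertW {K : Type*} (W : K → K → ℝ) (V : K → ℝ) (a b h : ℝ) :
    K → K → ℝ :=
  fun x y => W x y * Real.exp (h * (b * V y - a * V x))

attribute [local instance] Matrix.linftyOpNormedAddCommGroup Matrix.linftyOpNormedSpace
  Matrix.linftyOpNormedRing Matrix.linftyOpNormedAlgebra

section Aux
variable {K : Type*} [Fintype K] [DecidableEq K]

noncomputable def entryCLM (i j : K) : Matrix K K ℝ →L[ℝ] ℝ :=
  LinearMap.toContinuousLinearMap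
    ((LinearMap.proj j).comp (LinearMap.proj (R := ℝ) (φ := fun _ : K => K → ℝ) i))

theorem entryCLM_apply (i j : K) (M : Matrix K K ℝ) : entryCLM i j M = M i j := rfl

theorem hasDerivAt_expL (W : K → K → ℝ) (r : ℝ) (i j : K) :
    HasDerivAt (fun u => expL W u i j) ((expL W r * genMatrix W) i j) r := by
  have h := hasDerivAt_exp_smul_const (𝕂 := ℝ) (genMatrix W) r
  have h2 := (entryCLM i j).hasFDerivAt.comp_hasDerivAt r h
  exact h2

theorem expL_comm (W : K → K → ℝ) (r : ℝ) :
    expL W r * genMatrix W = genMatrix W * expL W r :=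
  (((Commute.refl (genMatrix W)).smul_left r).exp_left).eq

theorem genL_eq (W : K → K → ℝ) (f : K → ℝ) (x : K) :
    genL W f x = ∑ y, genMatrix W x y * f y := by
  classical
  rw [← Finset.add_sum_erase _ _ (Finset.mem_univ x)]
  have hd : genMatrix W x x = -∑ z ∈ Finset.univ.erase x, W x z := by
    simp [genMatrix, Finset.filter_ne']
  have ho : ∀ y ∈ Finset.univ.erase x, genMatrix W x y * f y = W x y * f y := by
    intro y hy
    have : ¬ x = y := fun h => (Finset.mem_erase.mp hy).1 h.symm
    simp [genMatrix, this]
  rw [hd, Finset.sum_congr rfl ho]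
  have hL : genL W f x = ∑ y ∈ Finset.univ.erase x, W x y * (f y - f x) := by
    rw [genL, ← Finset.add_sum_erase _ _ (Finset.mem_univ x)]
    simp
  rw [hL]
  simp only [mul_sub, Finset.sum_sub_distrib, ← Finset.sum_mul]
  ring

theorem sum_rot (f : K → K → K → ℝ) :
    ∑ x, ∑ z, ∑ k, f x z k = ∑ k, ∑ z, ∑ x, f x z k :=
  calc ∑ x, ∑ z, ∑ k, f x z k
      = ∑ x, ∑ k, ∑ z, f x z k := Finset.sum_congr rfl fun _ _ => Finset.sum_comm
    _ = ∑ k, ∑ x, ∑ z, f x z k := Finset.sum_comm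
    _ = ∑ k, ∑ z, ∑ x, f x z k := Finset.sum_congr rfl fun _ _ => Finset.sum_comm

theorem sumP (W : K → K → ℝ) (μ : K → ℝ) (s : ℝ) (h : K → ℝ) :
    ∑ x, (∑ z, μ z * (expL W s * genMatrix W) z x) * h x
      = ∑ k, muE W μ s k * genL W h k := by
  have l1 : ∀ x : K, (∑ z, μ z * (expL W s * genMatrix W) z x) * h x
      = ∑ z, ∑ k, μ z * expL W s z k * genMatrix W k x * h x := by
    intro x; rw [Finset.sum_mul]
    refine Finset.sum_congr rfl fun z _ => ?_
    rw [Matrix.mul_apply, Finset.mul_sum, Finset.sum_mul]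
    exact Finset.sum_congr rfl fun k _ => by ring
  have l2 : ∀ k : K, muE W μ s k * genL W h k
      = ∑ z, ∑ x, μ z * expL W s z k * genMatrix W k x * h x := by
    intro k
    simp only [muE, genL_eq]
    rw [Finset.sum_mul_sum]
    refine Finset.sum_congr rfl fun z _ => Finset.sum_congr rfl fun x _ => by ring
  simp only [l1, l2]
  exact sum_rot _

theorem genL_actE (W : K → K → ℝ) (r : ℝ) (Q : K → ℝ) (x : K) :
    genL W (actE W r Q) x = ∑ y, (genMatrix W * expL W r) x y * Q y := by
  simp only [actE, genL_eq, Matrix.mul_apply, Finset.mul_sum, Finset.sum_mul]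
  rw [Finset.sum_comm]
  exact Finset.sum_congr rfl fun y _ => Finset.sum_congr rfl fun k _ => by ring

theorem actE_genL (W : K → K → ℝ) (r : ℝ) (Q : K → ℝ) (x : K) :
    actE W r (genL W Q) x = ∑ y, (expL W r * genMatrix W) x y * Q y := by
  simp only [actE, genL_eq, Matrix.mul_apply, Finset.mul_sum, Finset.sum_mul]
  rw [Finset.sum_comm]
  exact Finset.sum_congr rfl fun y _ => Finset.sum_congr rfl fun k _ => by ring

theorem genL'_eq (W : K → K → ℝ) (V : K → ℝ) (a b : ℝ) (g : K → ℝ) (x : K) :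
    genL' W V a b g x
      = b * genL W (fun k => V k * g k) x - b * (genL W V x * g x)
        - a * (V x * genL W g x) := by
  simp only [genL', genL, Finset.mul_sum, Finset.sum_mul]
  rw [← Finset.sum_sub_distrib, ← Finset.sum_sub_distrib]
  exact Finset.sum_congr rfl fun y _ => by ring

end Aux

theorem response_formula
    {K : Type*} [Fintype K] [Nonempty K] [DecidableEq K]
    (W : K → K → ℝ) (hW : ∀ x y : K, x ≠ y → 0 ≤ W x y)
    (μ : K → ℝ) (hμ0 : ∀ x, 0 ≤ μ x) (hμ1 : ∑ x, μ x = 1)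
    (V Q : K → ℝ) (a b : ℝ)
    (t : ℝ) (ht : 0 ≤ t) (s : ℝ) (hs : 0 ≤ s) (hst : s ≤ t) :
    ∃ Ds Dt : ℝ,
      HasDerivAt (fun s' => ∑ x, muE W μ s' x * V x * actE W (t - s') Q x) Ds s ∧
      HasDerivAt (fun u => ∑ x, muE W μ s x * V x * actE W (u - s) Q x) Dt t ∧
      ∑ x, muE W μ s x * genL' W V a b (actE W (t - s) Q) x =
        b * Ds - a * Dt
          + b * ((∑ x, muE W μ s x * V x * actE W (t - s) (genL W Q) x)
              - ∑ x, muE W μ s x * genL W V x * actE W (t - s) Q x) := by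
  classical
  -- derivative of the evolved measure
  have hm : ∀ x : K, HasDerivAt (fun s' => muE W μ s' x)
      (∑ z, μ z * (expL W s * genMatrix W) z x) s := by
    intro x
    have := HasDerivAt.fun_sum (fun z (_ : z ∈ Finset.univ) =>
      (hasDerivAt_expL W s z x).const_mul (μ z))
    simpa [muE] using this
  have hts : HasDerivAt (fun s' : ℝ => t - s') (-1) s := by
    simpa using (hasDerivAt_id s).const_sub t
  have hus : HasDerivAt (fun u : ℝ => u - s) 1 t := by
    simpa using (hasDerivAt_id t).sub_const s
  have hgS : ∀ x : K, HasDerivAt (fun s' => actE W (t - s') Q x)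
      (∑ y, (expL W (t - s) * genMatrix W) x y * -1 * Q y) s := by
    intro x
    have hy : ∀ y : K, HasDerivAt (fun s' => expL W (t - s') x y * Q y)
        ((expL W (t - s) * genMatrix W) x y * -1 * Q y) s := fun y =>
      ((hasDerivAt_expL W (t - s) x y).comp s hts).mul_const (Q y)
    have := HasDerivAt.fun_sum (fun y (_ : y ∈ Finset.univ) => hy y)
    simpa [actE] using this
  have hgT : ∀ x : K, HasDerivAt (fun u => actE W (u - s) Q x)
      (∑ y, (expL W (t - s) * genMatrix W) x y * 1 * Q y) t := by
    intro x
    have hy : ∀ y : K, HasDerivAt (fun u => expL W (u - s) x y * Q y)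
        ((expL W (t - s) * genMatrix W) x y * 1 * Q y) t := fun y =>
      ((hasDerivAt_expL W (t - s) x y).comp t (h := fun u : ℝ => u - s) hus).mul_const (Q y)
    have := HasDerivAt.fun_sum (fun y (_ : y ∈ Finset.univ) => hy y)
    simpa [actE] using this
  have hDs : HasDerivAt (fun s' => ∑ x, muE W μ s' x * V x * actE W (t - s') Q x)
      (∑ x, ((∑ z, μ z * (expL W s * genMatrix W) z x) * V x * actE W (t - s) Q x
        + muE W μ s x * V x * ∑ y, (expL W (t - s) * genMatrix W) x y * -1 * Q y)) s := by
    apply HasDerivAt.fun_sum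
    intro x _
    exact ((hm x).mul_const (V x)).mul (hgS x)
  have hDt : HasDerivAt (fun u => ∑ x, muE W μ s x * V x * actE W (u - s) Q x)
      (∑ x, muE W μ s x * V x * ∑ y, (expL W (t - s) * genMatrix W) x y * 1 * Q y) t := by
    apply HasDerivAt.fun_sum
    intro x _
    exact (hgT x).const_mul (muE W μ s x * V x)
  refine ⟨_, _, hDs, hDt, ?_⟩
  -- key rewriting facts
  have hS : ∀ x : K, (∑ y, (expL W (t - s) * genMatrix W) x y * Q y)
      = genL W (actE W (t - s) Q) x := by
    intro x
    rw [expL_comm, ← genL_actE]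
  -- the three atoms
  set g : K → ℝ := actE W (t - s) Q with hg
  have e1 : ∑ x, muE W μ s x * genL' W V a b g x
      = b * (∑ x, muE W μ s x * genL W (fun k => V k * g k) x)
        - b * (∑ x, muE W μ s x * (genL W V x * g x))
        - a * (∑ x, muE W μ s x * (V x * genL W g x)) := by
    simp only [genL'_eq, Finset.mul_sum]
    rw [← Finset.sum_sub_distrib, ← Finset.sum_sub_distrib]
    exact Finset.sum_congr rfl fun x _ => by ring
  have e2 : (∑ x, ((∑ z, μ z * (expL W s * genMatrix W) z x) * V x * actE W (t - s) Q x
        + muE W μ s x * V x * ∑ y, (expL W (t - s) * genMatrix W) x y * -1 * Q y))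
      = (∑ x, muE W μ s x * genL W (fun k => V k * g k) x)
        - (∑ x, muE W μ s x * (V x * genL W g x)) := by
    rw [Finset.sum_add_distrib]
    have hA : (∑ x, (∑ z, μ z * (expL W s * genMatrix W) z x) * V x * actE W (t - s) Q x)
        = ∑ x, muE W μ s x * genL W (fun k => V k * g k) x := by
      rw [← sumP W μ s (fun k => V k * g k)]
      exact Finset.sum_congr rfl fun x _ => by rw [hg]; ring
    have hB : (∑ x, muE W μ s x * V x * ∑ y, (expL W (t - s) * genMatrix W) x y * -1 * Q y)
        = -∑ x, muE W μ s x * (V x * genL W g x) := by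
      rw [← Finset.sum_neg_distrib]
      refine Finset.sum_congr rfl fun x _ => ?_
      have hy : (∑ y, (expL W (t - s) * genMatrix W) x y * -1 * Q y)
          = -genL W g x := by
        rw [← hS x, ← Finset.sum_neg_distrib]
        exact Finset.sum_congr rfl fun y _ => by ring
      rw [hy]; ring
    rw [hA, hB]; ring
  have e3 : (∑ x, muE W μ s x * V x * ∑ y, (expL W (t - s) * genMatrix W) x y * 1 * Q y)
      = ∑ x, muE W μ s x * (V x * genL W g x) := by
    refine Finset.sum_congr rfl fun x _ => ?_
    have : (∑ y, (expL W (t - s) * genMatrix W) x y * 1 * Q y)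
        = genL W g x := by
      rw [← hS x]
      exact Finset.sum_congr rfl fun y _ => by ring
    rw [this]; ring
  have e4 : (∑ x, muE W μ s x * V x * actE W (t - s) (genL W Q) x)
      = ∑ x, muE W μ s x * (V x * genL W g x) := by
    refine Finset.sum_congr rfl fun x _ => ?_
    rw [actE_genL, hS x]; ring
  have e5 : (∑ x, muE W μ s x * genL W V x * actE W (t - s) Q x)
      = ∑ x, muE W μ s x * (genL W V x * g x) := by
    exact Finset.sum_congr rfl fun x _ => by rw [hg]; ring
  rw [e1, e2, e3, e4, e5]
  ring
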